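/- Let (F, ζ) : (C, Ω) → (C', Ω') be a map of categories with V-faces. Then there exists a unique map C(F, ζ) : C(Ω) → C(Ω') of V-dressed coalgebras such that for every object X of C, (ζ_X ⊗ C(F, ζ)) ∘ δ^Ω_X = δ^{Ω'}_{F(X)} ∘ ζ_X. -/

import Mathlib

open TensorProduct


section Dressed

variable (K : Type) [Field K] (V : Type) [Fintype V] [DecidableEq V]

/-- An `E`-bimodule structure on a `K`-vector space, where `E = R̊ ⊗ R` is the
span of the orthogonal idempotents `λ̊μ` (indexed by `V × V`): commuting unital
left and right actions, encoded by the action operators of the idempotents. -/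
structure EBim (C : Type) [AddCommGroup C] [Module K C] where
  /-- left action of the idempotent `λ̊μ` -/
  eL : V × V → C →ₗ[K] C
  /-- right action of the idempotent `λ̊μ` -/
  eR : V × V → C →ₗ[K] C
  eL_orth : ∀ p q : V × V, eL p ∘ₗ eL q = if p = q then eL p else 0
  eR_orth : ∀ p q : V × V, eR p ∘ₗ eR q = if p = q then eR p else 0
  eLR_comm : ∀ p q : V × V, eL p ∘ₗ eR q = eR q ∘ₗ eL p
  sum_eL : ∑ p : V × V, eL p = LinearMap.id
  sum_eR : ∑ p : V × V, eR p = LinearMap.id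

namespace EBim

variable {K V} {C : Type} [AddCommGroup C] [Module K C]

/-- left action of `λ̊` -/
def oL (B : EBim K V C) (l : V) : C →ₗ[K] C := ∑ m : V, B.eL (l, m)

/-- left action of the "plain" element `μ` -/
def pL (B : EBim K V C) (m : V) : C →ₗ[K] C := ∑ l : V, B.eL (l, m)

/-- right action of `λ̊` -/
def oR (B : EBim K V C) (l : V) : C →ₗ[K] C := ∑ m : V, B.eR (l, m)

/-- right action of the "plain" element `μ` -/
def pR (B : EBim K V C) (m : V) : C →ₗ[K] C := ∑ l : V, B.eR (l, m)

end EBim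

/-- A `V`-dressed coalgebra: a `K`-coalgebra with an `E`-bimodule structure
satisfying the compatibilities (9)–(11) of Hayashi's paper. -/
structure DressedStruct (C : Type) [AddCommGroup C] [Module K C]
    extends EBim K V C where
  comul : C →ₗ[K] C ⊗[K] C
  counit : C →ₗ[K] K
  coassoc : ∀ c : C,
    (TensorProduct.assoc K C C C) ((TensorProduct.map comul LinearMap.id) (comul c)) =
      (TensorProduct.map LinearMap.id comul) (comul c)
  counit_comul : ∀ c : C,
    (TensorProduct.lid K C) ((TensorProduct.map counit LinearMap.id) (comul c)) = c
  comul_counit : ∀ c : C,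
    (TensorProduct.rid K C) ((TensorProduct.map LinearMap.id counit) (comul c)) = c
  /-- `Δ(λ̊μ c λ̊'μ') = Σ λ̊ c₍₁₎ λ̊' ⊗ μ c₍₂₎ μ'` -/
  comul_act : ∀ (p q : V × V) (c : C),
    comul (eL p (eR q c)) =
      (TensorProduct.map (toEBim.oL p.1 ∘ₗ toEBim.oR q.1)
        (toEBim.pL p.2 ∘ₗ toEBim.pR q.2)) (comul c)
  /-- `Σ λ c₍₁₎ μ ⊗ c₍₂₎ = Σ c₍₁₎ ⊗ λ̊ c₍₂₎ μ̊` -/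
  exch : ∀ (l m : V) (c : C),
    (TensorProduct.map (toEBim.pL l ∘ₗ toEBim.pR m) LinearMap.id) (comul c) =
      (TensorProduct.map LinearMap.id (toEBim.oL l ∘ₗ toEBim.oR m)) (comul c)
  /-- `ε(λ̊ c μ̊) = ε(λ c μ)` -/
  counit_act : ∀ (l m : V) (c : C),
    counit (toEBim.oL l (toEBim.oR m c)) = counit (toEBim.pL l (toEBim.pR m c))

/-- `f` is a map of `V`-dressed coalgebras (a coalgebra map which is also an
`E`-bimodule map). -/
def IsDrMap {C D : Type} [AddCommGroup C] [Module K C] [AddCommGroup D] [Module K D]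
    (DC : DressedStruct K V C) (DD : DressedStruct K V D) (f : C →ₗ[K] D) : Prop :=
  (∀ c : C, DD.comul (f c) = (TensorProduct.map f f) (DC.comul c)) ∧
  (∀ c : C, DD.counit (f c) = DC.counit c) ∧
  (∀ (p : V × V) (c : C), f (DC.eL p c) = DD.eL p (f c)) ∧
  (∀ (p : V × V) (c : C), f (DC.eR p c) = DD.eR p (f c))

/-- The subspace of `C ⊗[K] D` by which one divides to obtain the tensor
product `C ⊗_E D` of `E`-bimodules. -/
noncomputable def dbal {C D : Type} [AddCommGroup C] [Module K C]
    [AddCommGroup D] [Module K D] (A : EBim K V C) (B : EBim K V D) :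
    Submodule K (C ⊗[K] D) :=
  Submodule.span K {z | ∃ (p : V × V) (c : C) (d : D),
    z = (A.eR p c) ⊗ₜ[K] d - c ⊗ₜ[K] (B.eL p d)}

/-- The underlying vector space of `C ⊗_E D`. -/
noncomputable abbrev DTensor {C D : Type} [AddCommGroup C] [Module K C]
    [AddCommGroup D] [Module K D] (A : EBim K V C) (B : EBim K V D) : Type :=
  (C ⊗[K] D) ⧸ dbal K V A B

/-- The defining formulas for the `V`-dressed coalgebra structure on the tensor
product `C ⊗_E D` of two `V`-dressed coalgebras:
`Δ(c ⊗_E d) = Σ (c₍₁₎ ⊗_E d₍₁₎) ⊗ (c₍₂₎ ⊗_E d₍₂₎)`,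
`ε(c ⊗_E d) = Σ_ν ε(cν) ε(νd)`, and the `E`-actions through the outer factors. -/
def IsDTensorStruct {C D : Type} [AddCommGroup C] [Module K C]
    [AddCommGroup D] [Module K D] (DC : DressedStruct K V C) (DD : DressedStruct K V D)
    (DT : DressedStruct K V (DTensor K V DC.toEBim DD.toEBim)) : Prop :=
  (∀ (c : C) (d : D),
    DT.comul ((dbal K V DC.toEBim DD.toEBim).mkQ (c ⊗ₜ[K] d)) =
      (TensorProduct.map (dbal K V DC.toEBim DD.toEBim).mkQ
          (dbal K V DC.toEBim DD.toEBim).mkQ)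
        ((TensorProduct.tensorTensorTensorComm K C C D D)
          (DC.comul c ⊗ₜ[K] DD.comul d))) ∧
  (∀ (c : C) (d : D),
    DT.counit ((dbal K V DC.toEBim DD.toEBim).mkQ (c ⊗ₜ[K] d)) =
      ∑ n : V, DC.counit (DC.toEBim.pR n c) * DD.counit (DD.toEBim.pL n d)) ∧
  (∀ (p : V × V) (c : C) (d : D),
    DT.eL p ((dbal K V DC.toEBim DD.toEBim).mkQ (c ⊗ₜ[K] d)) =
      (dbal K V DC.toEBim DD.toEBim).mkQ ((DC.eL p c) ⊗ₜ[K] d)) ∧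
  (∀ (p : V × V) (c : C) (d : D),
    DT.eR p ((dbal K V DC.toEBim DD.toEBim).mkQ (c ⊗ₜ[K] d)) =
      (dbal K V DC.toEBim DD.toEBim).mkQ (c ⊗ₜ[K] (DD.eR p d)))

/-- The `V`-dressed coalgebra `E` itself: the defining formulas on the
canonical basis `{λ̊μ}` of `E = V × V → K`. -/
def IsEStruct (D : DressedStruct K V (V × V → K)) : Prop :=
  (∀ p : V × V, D.comul (Pi.single p 1) =
    ∑ n : V, (Pi.single (p.1, n) 1 : V × V → K) ⊗ₜ[K] (Pi.single (n, p.2) 1 : V × V → K)) ∧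
  (∀ p : V × V, D.counit (Pi.single p 1) = if p.1 = p.2 then 1 else 0) ∧
  (∀ p q : V × V, D.eL p (Pi.single q 1) =
    if p = q then (Pi.single q 1 : V × V → K) else 0) ∧
  (∀ p q : V × V, D.eR p (Pi.single q 1) =
    if p = q then (Pi.single q 1 : V × V → K) else 0)

end Dressed
section BmdR

open CategoryTheory

variable (K : Type) [Field K] (V : Type) [Fintype V] [DecidableEq V]

/-- A finite-dimensional `R`-bimodule, where `R = R_V` is the `K`-span of the
orthogonal idempotents `λ ∈ V`: a finite-dimensional `K`-vector space with
commuting unital left and right actions of `R`, encoded by the action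
operators of the idempotents. -/
structure Bmd where
  M : Type
  [acg : AddCommGroup M]
  [mod : Module K M]
  [fd : FiniteDimensional K M]
  /-- left action of `λ ∈ V` -/
  aL : V → M →ₗ[K] M
  /-- right action of `λ ∈ V` -/
  aR : V → M →ₗ[K] M
  aL_orth : ∀ l m : V, aL l ∘ₗ aL m = if l = m then aL l else 0
  aR_orth : ∀ l m : V, aR l ∘ₗ aR m = if l = m then aR l else 0
  aLR_comm : ∀ l m : V, aL l ∘ₗ aR m = aR m ∘ₗ aL l
  sum_aL : ∑ l : V, aL l = LinearMap.id
  sum_aR : ∑ l : V, aR l = LinearMap.id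

attribute [instance] Bmd.acg Bmd.mod Bmd.fd

variable {K V}

/-- Maps of `R`-bimodules. -/
def IsBmdMap (M N : Bmd K V) (f : M.M →ₗ[K] N.M) : Prop :=
  (∀ l : V, f ∘ₗ M.aL l = N.aL l ∘ₗ f) ∧ (∀ l : V, f ∘ₗ M.aR l = N.aR l ∘ₗ f)

variable (K V)

/-- The category `bmd(R)` of finite-dimensional `R`-bimodules. -/
noncomputable instance Bmd.category : Category (Bmd K V) where
  Hom M N := {f : M.M →ₗ[K] N.M // IsBmdMap M N f}
  id M := ⟨LinearMap.id, fun l => by simp, fun l => by simp⟩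
  comp {M N P} f g := ⟨g.1 ∘ₗ f.1, by
    obtain ⟨fl, fr⟩ := f.2
    obtain ⟨gl, gr⟩ := g.2
    constructor
    · intro l
      rw [LinearMap.comp_assoc, fl l, ← LinearMap.comp_assoc, gl l, LinearMap.comp_assoc]
    · intro l
      rw [LinearMap.comp_assoc, fr l, ← LinearMap.comp_assoc, gr l, LinearMap.comp_assoc]⟩
  id_comp f := Subtype.ext (LinearMap.comp_id f.1)
  comp_id f := Subtype.ext (LinearMap.id_comp f.1)
  assoc f g h := Subtype.ext (LinearMap.comp_assoc f.1 g.1 h.1).symm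

variable {K V}

@[simp] lemma Bmd.id_coe (M : Bmd K V) : (𝟙 M : M ⟶ M).1 = LinearMap.id := rfl

@[simp] lemma Bmd.comp_coe {M N P : Bmd K V} (f : M ⟶ N) (g : N ⟶ P) :
    (f ≫ g).1 = g.1 ∘ₗ f.1 := rfl

end BmdR

section Coend

open CategoryTheory

variable (K : Type) [Field K] (V : Type) [Fintype V] [DecidableEq V]
variable {C : Type} [SmallCategory C] (Ω : C ⥤ Bmd K V)

/-- The component `Ω(X)* ⊗ Ω(X)` of the functor whose coend is `C(Ω)`. -/
abbrev dMc (X : C) : Type := ((Ω.obj X).M →ₗ[K] K) ⊗[K] (Ω.obj X).M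

/-- The free vector space on the pairs `(m*, m)` with `m* ∈ Ω(X)*`, `m ∈ Ω(X)`,
`X ∈ ob C`. -/
abbrev PreCoend : Type :=
  (Σ X : C, ((Ω.obj X).M →ₗ[K] K) × (Ω.obj X).M) →₀ K

/-- The relations presenting the coend `C(Ω)` of `Ω* ⊗ Ω` as a quotient of the
free vector space `PreCoend`: bilinearity in `(m*, m)` and the coend
(dinaturality) relations `(f*(m*)) ⊗ m ∼ m* ⊗ f(m)`. -/
noncomputable def coendRel : Submodule K (PreCoend K V Ω) :=
  Submodule.span K
    ({z | ∃ (X : C) (g g' : (Ω.obj X).M →ₗ[K] K) (m : (Ω.obj X).M),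
        z = Finsupp.single ⟨X, g + g', m⟩ (1 : K) -
            Finsupp.single ⟨X, g, m⟩ 1 - Finsupp.single ⟨X, g', m⟩ 1} ∪
     {z | ∃ (X : C) (c : K) (g : (Ω.obj X).M →ₗ[K] K) (m : (Ω.obj X).M),
        z = Finsupp.single ⟨X, c • g, m⟩ (1 : K) -
            c • Finsupp.single ⟨X, g, m⟩ 1} ∪
     {z | ∃ (X : C) (g : (Ω.obj X).M →ₗ[K] K) (m m' : (Ω.obj X).M),
        z = Finsupp.single ⟨X, g, m + m'⟩ (1 : K) -
            Finsupp.single ⟨X, g, m⟩ 1 - Finsupp.single ⟨X, g, m'⟩ 1} ∪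
     {z | ∃ (X : C) (c : K) (g : (Ω.obj X).M →ₗ[K] K) (m : (Ω.obj X).M),
        z = Finsupp.single ⟨X, g, c • m⟩ (1 : K) -
            c • Finsupp.single ⟨X, g, m⟩ 1} ∪
     {z | ∃ (X Y : C) (f : X ⟶ Y) (g : (Ω.obj Y).M →ₗ[K] K) (m : (Ω.obj X).M),
        z = Finsupp.single ⟨X, g ∘ₗ (Ω.map f).1, m⟩ (1 : K) -
            Finsupp.single ⟨Y, g, (Ω.map f).1 m⟩ 1})

/-- The underlying vector space of the coend `C(Ω)` of `Ω* ⊗ Ω`. -/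
noncomputable abbrev CoendT : Type := PreCoend K V Ω ⧸ coendRel K V Ω

/-- The universal dinatural transformation
`κ_X : Ω(X)* ⊗ Ω(X) → C(Ω)`. -/
noncomputable def coendK (X : C) : dMc K V Ω X →ₗ[K] CoendT K V Ω :=
  TensorProduct.lift (LinearMap.mk₂ K
    (fun g m => (coendRel K V Ω).mkQ (Finsupp.single ⟨X, g, m⟩ (1 : K)))
    (fun g g' m => by
      beta_reduce
      rw [← map_add, Submodule.mkQ_apply, Submodule.mkQ_apply, Submodule.Quotient.eq]
      exact Submodule.subset_span (Or.inl (Or.inl (Or.inl (Or.inl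
        ⟨X, g, g', m, (sub_sub _ _ _).symm⟩)))))
    (fun c g m => by
      beta_reduce
      rw [← map_smul, Submodule.mkQ_apply, Submodule.mkQ_apply, Submodule.Quotient.eq]
      exact Submodule.subset_span (Or.inl (Or.inl (Or.inl (Or.inr ⟨X, c, g, m, rfl⟩)))))
    (fun g m m' => by
      beta_reduce
      rw [← map_add, Submodule.mkQ_apply, Submodule.mkQ_apply, Submodule.Quotient.eq]
      exact Submodule.subset_span (Or.inl (Or.inl (Or.inr
        ⟨X, g, m, m', (sub_sub _ _ _).symm⟩))))
    (fun c g m => by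
      beta_reduce
      rw [← map_smul, Submodule.mkQ_apply, Submodule.mkQ_apply, Submodule.Quotient.eq]
      exact Submodule.subset_span (Or.inl (Or.inr ⟨X, c, g, m, rfl⟩))))

/-- The coalgebra comultiplication on `C(Ω)` is determined by
`Δ(κ_X(m* ⊗ m)) = Σ_j κ_X(m* ⊗ m_j) ⊗ κ_X(m^j ⊗ m)` for any finite basis
`{m_j}` of `Ω(X)` with dual basis `{m^j}`. -/
def CoendComulSpec (comul : CoendT K V Ω →ₗ[K] CoendT K V Ω ⊗[K] CoendT K V Ω) : Prop :=
  ∀ (X : C) (ι : Type) (_ : Fintype ι) (b : Module.Basis ι K (Ω.obj X).M)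
    (g : (Ω.obj X).M →ₗ[K] K) (m : (Ω.obj X).M),
    comul (coendK K V Ω X (g ⊗ₜ[K] m)) =
      ∑ j : ι, (coendK K V Ω X (g ⊗ₜ[K] b j)) ⊗ₜ[K] (coendK K V Ω X (b.coord j ⊗ₜ[K] m))

/-- The counit of `C(Ω)` is determined by `ε(κ_X(m* ⊗ m)) = ⟨m*, m⟩`. -/
def CoendCounitSpec (counit : CoendT K V Ω →ₗ[K] K) : Prop :=
  ∀ (X : C) (g : (Ω.obj X).M →ₗ[K] K) (m : (Ω.obj X).M),
    counit (coendK K V Ω X (g ⊗ₜ[K] m)) = g m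

/-- The `E`-bimodule structure of `C(Ω)`, induced by
`λ̊μ (n ⊗ m) λ̊'μ' = λ̊ n λ̊' ⊗ μ m μ'` on `Ω(X)* ⊗ Ω(X)`. -/
def CoendBimSpec (B : EBim K V (CoendT K V Ω)) : Prop :=
  ∀ (p : V × V) (X : C) (g : (Ω.obj X).M →ₗ[K] K) (m : (Ω.obj X).M),
    B.eL p (coendK K V Ω X (g ⊗ₜ[K] m)) =
      coendK K V Ω X ((g ∘ₗ (Ω.obj X).aL p.1) ⊗ₜ[K] ((Ω.obj X).aL p.2 m)) ∧
    B.eR p (coendK K V Ω X (g ⊗ₜ[K] m)) =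
      coendK K V Ω X ((g ∘ₗ (Ω.obj X).aR p.1) ⊗ₜ[K] ((Ω.obj X).aR p.2 m))

/-- The full `V`-dressed coalgebra structure of the coend `C(Ω)`. -/
def CoendDressedSpec (D : DressedStruct K V (CoendT K V Ω)) : Prop :=
  CoendComulSpec K V Ω D.comul ∧ CoendCounitSpec K V Ω D.counit ∧
    CoendBimSpec K V Ω D.toEBim

/-- The right `C(Ω)`-comodule structure
`δ_X(m) = Σ_i m_i ⊗ κ_X(m^i ⊗ m)` on `Ω(X)`. -/
noncomputable def coendDelta (X : C) :
    (Ω.obj X).M →ₗ[K] (Ω.obj X).M ⊗[K] CoendT K V Ω :=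
  ∑ i, (TensorProduct.mk K (Ω.obj X).M (CoendT K V Ω)
      (Module.finBasis K (Ω.obj X).M i)) ∘ₗ coendK K V Ω X ∘ₗ
    (TensorProduct.mk K ((Ω.obj X).M →ₗ[K] K) (Ω.obj X).M
      ((Module.finBasis K (Ω.obj X).M).coord i))

end Coend
section H
variable (K : Type) [Field K]
lemma basis_sum_coord {M : Type} [AddCommGroup M] [Module K M] {ι : Type} [Fintype ι]
    (b : Module.Basis ι K M) (f : M →ₗ[K] K) : ∑ i, f (b i) • b.coord i = f := by
  apply LinearMap.ext; intro x
  simp only [LinearMap.sum_apply, LinearMap.smul_apply, Module.Basis.coord_apply, smul_eq_mul]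
  conv_rhs => rw [← b.sum_repr x]
  rw [map_sum]
  simp [mul_comm]

lemma sum_basis_tmul {M N : Type} [AddCommGroup M] [Module K M] [AddCommGroup N] [Module K N]
    {ι ι' : Type} [Fintype ι] [Fintype ι'] (b : Module.Basis ι K M) (c : Module.Basis ι' K M)
    (φ : (M →ₗ[K] K) →ₗ[K] N) :
    ∑ i, b i ⊗ₜ[K] φ (b.coord i) = ∑ j, c j ⊗ₜ[K] φ (c.coord j) := by
  have key : ∀ j, (∑ i, c.coord j (b i) • b.coord i) = c.coord j :=
    fun j => basis_sum_coord K b (c.coord j)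
  calc ∑ i, b i ⊗ₜ[K] φ (b.coord i)
      = ∑ i, (∑ j, c.coord j (b i) • c j) ⊗ₜ[K] φ (b.coord i) := by
        refine Finset.sum_congr rfl fun i _ => ?_
        congr 1
        conv_lhs => rw [← c.sum_repr (b i)]
        simp [Module.Basis.coord_apply]
    _ = ∑ j, ∑ i, c j ⊗ₜ[K] (c.coord j (b i) • φ (b.coord i)) := by
        rw [Finset.sum_comm]
        refine Finset.sum_congr rfl fun i _ => ?_
        rw [TensorProduct.sum_tmul]
        exact Finset.sum_congr rfl fun j _ => by rw [smul_tmul, tmul_smul]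
    _ = ∑ j, c j ⊗ₜ[K] φ (c.coord j) := by
        refine Finset.sum_congr rfl fun j _ => ?_
        have : (∑ a, c.coord j (b a) • φ (b.coord a)) = φ (∑ a, c.coord j (b a) • b.coord a) := by
          rw [map_sum]; exact Finset.sum_congr rfl fun a _ => (map_smul φ _ _).symm
        rw [← tmul_sum, this, key j]
end H

section MyHelpers
open CategoryTheory
variable (K : Type) [Field K] (V : Type) [Fintype V] [DecidableEq V]
variable {C : Type} [SmallCategory C] (Ω : C ⥤ Bmd K V)

lemma my_coendK_apply (X : C) (g : (Ω.obj X).M →ₗ[K] K) (m : (Ω.obj X).M) :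
    coendK K V Ω X (g ⊗ₜ[K] m) =
      (coendRel K V Ω).mkQ (Finsupp.single ⟨X, g, m⟩ (1 : K)) := by
  simp [coendK]

lemma my_coendK_dinat (X Y : C) (f : X ⟶ Y) (g : (Ω.obj Y).M →ₗ[K] K) (m : (Ω.obj X).M) :
    coendK K V Ω X ((g ∘ₗ (Ω.map f).1) ⊗ₜ[K] m) =
      coendK K V Ω Y (g ⊗ₜ[K] ((Ω.map f).1 m)) := by
  rw [my_coendK_apply, my_coendK_apply, Submodule.mkQ_apply, Submodule.mkQ_apply,
    Submodule.Quotient.eq]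
  exact Submodule.subset_span (Or.inr ⟨X, Y, f, g, m, rfl⟩)

lemma my_coendT_ext {W : Type} [AddCommGroup W] [Module K W]
    (φ ψ : CoendT K V Ω →ₗ[K] W)
    (hp : ∀ (X : C) (g : (Ω.obj X).M →ₗ[K] K) (m : (Ω.obj X).M),
      φ (coendK K V Ω X (g ⊗ₜ[K] m)) = ψ (coendK K V Ω X (g ⊗ₜ[K] m))) : φ = ψ := by
  refine Submodule.linearMap_qext _ ?_
  apply Finsupp.lhom_ext
  rintro ⟨X, g, m⟩ c
  have hs : (Finsupp.single (⟨X, (g, m)⟩ : Σ X : C, ((Ω.obj X).M →ₗ[K] K) × (Ω.obj X).M) c)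
      = c • Finsupp.single ⟨X, (g, m)⟩ (1 : K) := by
    rw [Finsupp.smul_single, smul_eq_mul, mul_one]
  simp only [LinearMap.comp_apply, hs, map_smul]
  congr 1
  have := hp X g m
  rwa [my_coendK_apply, Submodule.mkQ_apply] at this

lemma my_coendDelta_apply (X : C) (m : (Ω.obj X).M) :
    coendDelta K V Ω X m = ∑ i, (Module.finBasis K (Ω.obj X).M i) ⊗ₜ[K]
      coendK K V Ω X ((Module.finBasis K (Ω.obj X).M).coord i ⊗ₜ[K] m) := by
  simp [coendDelta]

end MyHelpers
section Stmt14

open CategoryTheory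

variable (K : Type) [Field K] (V : Type) [Fintype V] [DecidableEq V]
variable {C C' : Type} [SmallCategory C] [SmallCategory C']
variable (Ω : C ⥤ Bmd K V) (Ω' : C' ⥤ Bmd K V)

/-- The commuting square `(ζ_X ⊗ C(F, ζ)) ∘ δ^Ω_X = δ^{Ω'}_{F(X)} ∘ ζ_X`
characterising the induced map on coends. -/
def CMapSquare (F : C ⥤ C')
    (ζ : ∀ X : C, (Ω.obj X).M ≃ₗ[K] (Ω'.obj (F.obj X)).M)
    (h : CoendT K V Ω →ₗ[K] CoendT K V Ω') : Prop :=
  ∀ (X : C) (m : (Ω.obj X).M),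
    (TensorProduct.map (ζ X).toLinearMap h) (coendDelta K V Ω X m) =
      coendDelta K V Ω' (F.obj X) (ζ X m)


noncomputable def myPreH (F : C ⥤ C')
    (ζ : ∀ X : C, (Ω.obj X).M ≃ₗ[K] (Ω'.obj (F.obj X)).M) :
    PreCoend K V Ω →ₗ[K] CoendT K V Ω' :=
  (Finsupp.lift (CoendT K V Ω') K _) fun s =>
    coendK K V Ω' (F.obj s.1) ((s.2.1 ∘ₗ (ζ s.1).symm.toLinearMap) ⊗ₜ[K] (ζ s.1 s.2.2))

lemma myPreH_single (F : C ⥤ C')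
    (ζ : ∀ X : C, (Ω.obj X).M ≃ₗ[K] (Ω'.obj (F.obj X)).M)
    (X : C) (g : (Ω.obj X).M →ₗ[K] K) (m : (Ω.obj X).M) :
    myPreH K V Ω Ω' F ζ (Finsupp.single ⟨X, g, m⟩ (1 : K)) =
      coendK K V Ω' (F.obj X) ((g ∘ₗ (ζ X).symm.toLinearMap) ⊗ₜ[K] (ζ X m)) := by
  simp [myPreH]

lemma myKer (F : C ⥤ C')
    (ζ : ∀ X : C, (Ω.obj X).M ≃ₗ[K] (Ω'.obj (F.obj X)).M)
    (hnat : ∀ (X Y : C) (f : X ⟶ Y) (x : (Ω.obj X).M),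
      ζ Y ((Ω.map f).1 x) = (Ω'.map (F.map f)).1 (ζ X x)) :
    coendRel K V Ω ≤ LinearMap.ker (myPreH K V Ω Ω' F ζ) := by
  rw [coendRel, Submodule.span_le]
  rintro z ((((⟨X, g, g', m, rfl⟩ | ⟨X, c, g, m, rfl⟩) | ⟨X, g, m, m', rfl⟩) |
    ⟨X, c, g, m, rfl⟩) | ⟨X, Y, f, g, m, rfl⟩) <;>
    simp only [SetLike.mem_coe, LinearMap.mem_ker, map_sub, map_smul, myPreH_single]
  · rw [LinearMap.add_comp, add_tmul, map_add]; abel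
  · rw [LinearMap.smul_comp, ← smul_tmul', map_smul, sub_self]
  · rw [map_add, tmul_add, map_add]; abel
  · rw [tmul_smul, map_smul, sub_self]
  · have hg : (g ∘ₗ (Ω.map f).1) ∘ₗ (ζ X).symm.toLinearMap =
        (g ∘ₗ (ζ Y).symm.toLinearMap) ∘ₗ (Ω'.map (F.map f)).1 := by
      apply LinearMap.ext; intro x
      simp only [LinearMap.comp_apply, LinearEquiv.coe_coe]
      congr 1
      have h1 := hnat X Y f ((ζ X).symm x)
      rw [(ζ X).apply_symm_apply] at h1
      exact (ζ Y).eq_symm_apply.mpr h1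
    rw [hg, hnat X Y f m,
      my_coendK_dinat K V Ω' (F.obj X) (F.obj Y) (F.map f), sub_self]

noncomputable def myH (F : C ⥤ C')
    (ζ : ∀ X : C, (Ω.obj X).M ≃ₗ[K] (Ω'.obj (F.obj X)).M)
    (hnat : ∀ (X Y : C) (f : X ⟶ Y) (x : (Ω.obj X).M),
      ζ Y ((Ω.map f).1 x) = (Ω'.map (F.map f)).1 (ζ X x)) :
    CoendT K V Ω →ₗ[K] CoendT K V Ω' :=
  Submodule.liftQ _ (myPreH K V Ω Ω' F ζ) (myKer K V Ω Ω' F ζ hnat)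

lemma myH_kappa (F : C ⥤ C')
    (ζ : ∀ X : C, (Ω.obj X).M ≃ₗ[K] (Ω'.obj (F.obj X)).M)
    (hnat : ∀ (X Y : C) (f : X ⟶ Y) (x : (Ω.obj X).M),
      ζ Y ((Ω.map f).1 x) = (Ω'.map (F.map f)).1 (ζ X x))
    (X : C) (g : (Ω.obj X).M →ₗ[K] K) (m : (Ω.obj X).M) :
    myH K V Ω Ω' F ζ hnat (coendK K V Ω X (g ⊗ₜ[K] m)) =
      coendK K V Ω' (F.obj X) ((g ∘ₗ (ζ X).symm.toLinearMap) ⊗ₜ[K] (ζ X m)) := by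
  rw [my_coendK_apply, Submodule.mkQ_apply, myH, Submodule.liftQ_apply, myPreH_single]

lemma my_sum_smul_kappa {CC : Type} [SmallCategory CC] (Ψ : CC ⥤ Bmd K V) (X : CC)
    {ι : Type} [Fintype ι] (cs : ι → K) (gs : ι → ((Ψ.obj X).M →ₗ[K] K))
    (m : (Ψ.obj X).M) :
    ∑ i, cs i • coendK K V Ψ X (gs i ⊗ₜ[K] m) =
      coendK K V Ψ X ((∑ i, cs i • gs i) ⊗ₜ[K] m) := by
  rw [TensorProduct.sum_tmul, map_sum]
  exact Finset.sum_congr rfl fun i _ => by rw [← map_smul, smul_tmul']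

lemma my_coord_map (F : C ⥤ C')
    (ζ : ∀ X : C, (Ω.obj X).M ≃ₗ[K] (Ω'.obj (F.obj X)).M)
    (X : C) {ι : Type} (b : Module.Basis ι K (Ω.obj X).M) (i : ι) :
    b.coord i ∘ₗ (ζ X).symm.toLinearMap = (b.map (ζ X)).coord i := by
  apply LinearMap.ext; intro x
  simp [Module.Basis.coord_apply, Module.Basis.map_repr]

lemma mySquare_formula (F : C ⥤ C')
    (ζ : ∀ X : C, (Ω.obj X).M ≃ₗ[K] (Ω'.obj (F.obj X)).M)
    (h' : CoendT K V Ω →ₗ[K] CoendT K V Ω')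
    (hsq : CMapSquare K V Ω Ω' F ζ h')
    (X : C) (g : (Ω.obj X).M →ₗ[K] K) (m : (Ω.obj X).M) :
    h' (coendK K V Ω X (g ⊗ₜ[K] m)) =
      coendK K V Ω' (F.obj X) ((g ∘ₗ (ζ X).symm.toLinearMap) ⊗ₜ[K] (ζ X m)) := by
  classical
  set b := Module.finBasis K (Ω.obj X).M with hb
  set b' := Module.finBasis K (Ω'.obj (F.obj X)).M with hb'
  have sq := hsq X m
  rw [my_coendDelta_apply, my_coendDelta_apply] at sq
  set φg : (Ω'.obj (F.obj X)).M ⊗[K] CoendT K V Ω' →ₗ[K] CoendT K V Ω' :=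
    TensorProduct.lift ((LinearMap.lsmul K (CoendT K V Ω')) ∘ₗ
      (g ∘ₗ (ζ X).symm.toLinearMap)) with hφg
  have sq2 := congrArg φg sq
  simp only [map_sum, TensorProduct.map_tmul, hφg, TensorProduct.lift.tmul,
    LinearMap.comp_apply, LinearMap.lsmul_apply, LinearEquiv.coe_coe,
    LinearEquiv.symm_apply_apply] at sq2
  calc h' (coendK K V Ω X (g ⊗ₜ[K] m))
      = h' (coendK K V Ω X ((∑ i, g (b i) • b.coord i) ⊗ₜ[K] m)) := by
        rw [basis_sum_coord]
    _ = ∑ i, g (b i) • h' (coendK K V Ω X (b.coord i ⊗ₜ[K] m)) := by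
        rw [← my_sum_smul_kappa, map_sum]
        exact Finset.sum_congr rfl fun i _ => (map_smul h' _ _)
    _ = ∑ j, g ((ζ X).symm (b' j)) • coendK K V Ω' (F.obj X) (b'.coord j ⊗ₜ[K] ζ X m) :=
        sq2
    _ = coendK K V Ω' (F.obj X)
          ((∑ j, (g ∘ₗ (ζ X).symm.toLinearMap) (b' j) • b'.coord j) ⊗ₜ[K] ζ X m) := by
        rw [← my_sum_smul_kappa]
        rfl
    _ = coendK K V Ω' (F.obj X) ((g ∘ₗ (ζ X).symm.toLinearMap) ⊗ₜ[K] (ζ X m)) := by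
        rw [basis_sum_coord]

lemma mySquare_holds (F : C ⥤ C')
    (ζ : ∀ X : C, (Ω.obj X).M ≃ₗ[K] (Ω'.obj (F.obj X)).M)
    (hnat : ∀ (X Y : C) (f : X ⟶ Y) (x : (Ω.obj X).M),
      ζ Y ((Ω.map f).1 x) = (Ω'.map (F.map f)).1 (ζ X x)) :
    CMapSquare K V Ω Ω' F ζ (myH K V Ω Ω' F ζ hnat) := by
  intro X m
  rw [my_coendDelta_apply, my_coendDelta_apply, map_sum]
  set b := Module.finBasis K (Ω.obj X).M with hb
  set φ : ((Ω'.obj (F.obj X)).M →ₗ[K] K) →ₗ[K] CoendT K V Ω' :=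
    coendK K V Ω' (F.obj X) ∘ₗ
      ((TensorProduct.mk K ((Ω'.obj (F.obj X)).M →ₗ[K] K) (Ω'.obj (F.obj X)).M).flip
        (ζ X m)) with hφ
  have lhs : ∀ i, (TensorProduct.map (ζ X).toLinearMap (myH K V Ω Ω' F ζ hnat))
        (b i ⊗ₜ[K] coendK K V Ω X (b.coord i ⊗ₜ[K] m)) =
      (b.map (ζ X)) i ⊗ₜ[K] φ ((b.map (ζ X)).coord i) := by
    intro i
    rw [TensorProduct.map_tmul, myH_kappa, my_coord_map K V Ω Ω' F ζ X b i]
    rfl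
  rw [Finset.sum_congr rfl fun i _ => lhs i]
  exact sum_basis_tmul K (b.map (ζ X)) (Module.finBasis K (Ω'.obj (F.obj X)).M) φ

/-- STATEMENT 14: a map `(F, ζ) : (C, Ω) → (C', Ω')` of categories with
`V`-faces induces a unique map `C(F, ζ) : C(Ω) → C(Ω')` of `V`-dressed
coalgebras such that `(ζ_X ⊗ C(F, ζ)) ∘ δ^Ω_X = δ^{Ω'}_{F(X)} ∘ ζ_X` for all
`X`. -/
theorem coend_functorial_exists_unique (F : C ⥤ C')
    (ζ : ∀ X : C, (Ω.obj X).M ≃ₗ[K] (Ω'.obj (F.obj X)).M)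
    (hbim : ∀ (X : C) (l : V) (x : (Ω.obj X).M),
      ζ X ((Ω.obj X).aL l x) = (Ω'.obj (F.obj X)).aL l (ζ X x) ∧
      ζ X ((Ω.obj X).aR l x) = (Ω'.obj (F.obj X)).aR l (ζ X x))
    (hnat : ∀ (X Y : C) (f : X ⟶ Y) (x : (Ω.obj X).M),
      ζ Y ((Ω.map f).1 x) = (Ω'.map (F.map f)).1 (ζ X x))
    (D : DressedStruct K V (CoendT K V Ω)) (hD : CoendDressedSpec K V Ω D)
    (D' : DressedStruct K V (CoendT K V Ω')) (hD' : CoendDressedSpec K V Ω' D') :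
    ∃ h : CoendT K V Ω →ₗ[K] CoendT K V Ω',
      (IsDrMap K V D D' h ∧ CMapSquare K V Ω Ω' F ζ h) ∧
      ∀ h' : CoendT K V Ω →ₗ[K] CoendT K V Ω',
        IsDrMap K V D D' h' → CMapSquare K V Ω Ω' F ζ h' → h' = h := by
  classical
  obtain ⟨hDc, hDe, hDb⟩ := hD
  obtain ⟨hD'c, hD'e, hD'b⟩ := hD'
  set h := myH K V Ω Ω' F ζ hnat with hh
  have haL : ∀ (X : C) (l : V),
      ((Ω.obj X).aL l) ∘ₗ (ζ X).symm.toLinearMap =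
        (ζ X).symm.toLinearMap ∘ₗ ((Ω'.obj (F.obj X)).aL l) := by
    intro X l
    apply LinearMap.ext; intro x
    simp only [LinearMap.comp_apply, LinearEquiv.coe_coe]
    have h1 := (hbim X l ((ζ X).symm x)).1
    rw [(ζ X).apply_symm_apply] at h1
    exact (ζ X).eq_symm_apply.mpr h1
  have haR : ∀ (X : C) (l : V),
      ((Ω.obj X).aR l) ∘ₗ (ζ X).symm.toLinearMap =
        (ζ X).symm.toLinearMap ∘ₗ ((Ω'.obj (F.obj X)).aR l) := by
    intro X l
    apply LinearMap.ext; intro x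
    simp only [LinearMap.comp_apply, LinearEquiv.coe_coe]
    have h1 := (hbim X l ((ζ X).symm x)).2
    rw [(ζ X).apply_symm_apply] at h1
    exact (ζ X).eq_symm_apply.mpr h1
  refine ⟨h, ⟨⟨?_, ?_, ?_, ?_⟩, mySquare_holds K V Ω Ω' F ζ hnat⟩, ?_⟩
  · -- comultiplication
    have key : D'.comul ∘ₗ h = (TensorProduct.map h h) ∘ₗ D.comul := by
      apply my_coendT_ext
      intro X g m
      simp only [LinearMap.comp_apply, hh]
      rw [myH_kappa]
      rw [hD'c (F.obj X) (Fin (Module.finrank K (Ω.obj X).M)) inferInstance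
        ((Module.finBasis K (Ω.obj X).M).map (ζ X)) (g ∘ₗ (ζ X).symm.toLinearMap) (ζ X m)]
      rw [hDc X (Fin (Module.finrank K (Ω.obj X).M)) inferInstance
        (Module.finBasis K (Ω.obj X).M) g m, map_sum]
      refine Finset.sum_congr rfl fun j _ => ?_
      rw [TensorProduct.map_tmul, myH_kappa, myH_kappa,
        my_coord_map K V Ω Ω' F ζ X (Module.finBasis K (Ω.obj X).M) j, Module.Basis.map_apply]
    exact fun c => LinearMap.congr_fun key c
  · -- counit
    have key : D'.counit ∘ₗ h = D.counit := by
      apply my_coendT_ext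
      intro X g m
      simp only [LinearMap.comp_apply, hh]
      rw [myH_kappa, hD'e (F.obj X) (g ∘ₗ (ζ X).symm.toLinearMap) (ζ X m), hDe X g m]
      simp
    exact fun c => LinearMap.congr_fun key c
  · -- eL
    intro p
    have key : h ∘ₗ D.eL p = D'.eL p ∘ₗ h := by
      apply my_coendT_ext
      intro X g m
      simp only [LinearMap.comp_apply, hh]
      rw [(hDb p X g m).1, myH_kappa, myH_kappa,
        (hD'b p (F.obj X) (g ∘ₗ (ζ X).symm.toLinearMap) (ζ X m)).1]
      rw [LinearMap.comp_assoc, haL X p.1, ← LinearMap.comp_assoc, (hbim X p.2 m).1]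
    exact fun c => LinearMap.congr_fun key c
  · -- eR
    intro p
    have key : h ∘ₗ D.eR p = D'.eR p ∘ₗ h := by
      apply my_coendT_ext
      intro X g m
      simp only [LinearMap.comp_apply, hh]
      rw [(hDb p X g m).2, myH_kappa, myH_kappa,
        (hD'b p (F.obj X) (g ∘ₗ (ζ X).symm.toLinearMap) (ζ X m)).2]
      rw [LinearMap.comp_assoc, haR X p.1, ← LinearMap.comp_assoc, (hbim X p.2 m).2]
    exact fun c => LinearMap.congr_fun key c
  · -- uniqueness
    intro h' _ hsq
    apply my_coendT_ext
    intro X g m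
    rw [mySquare_formula K V Ω Ω' F ζ h' hsq X g m, hh, myH_kappa]


end Stmt14
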